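/- (Six-vertex block decomposition of the Zamolodchikov R-matrix.) Identify ℂ^{2n} with ℂ² ⊗ ℂⁿ via the matrix-unit correspondence 𝚎_{ij} = x_{11}⊗e_{ij}, 𝚎_{n+i,j} = x_{21}⊗e_{ij}, 𝚎_{i,n+j} = x_{12}⊗e_{ij}, 𝚎_{n+i,n+j} = x_{22}⊗e_{ij} (1 ≤ i, j ≤ n), where x_{ab} and e_{ij} are the matrix units of End(ℂ²) and End(ℂⁿ) respectively. Under the induced isomorphism ℂ^{2n} ⊗ ℂ^{2n} ≅ (ℂ² ⊗ ℂ²) ⊗ (ℂⁿ ⊗ ℂⁿ) rearranging tensor factors, the Zamolodchikov R-matrix R̃(u) on ℂ^{2n} ⊗ ℂ^{2n} equals (x_{11}⊗x_{11} + x_{22}⊗x_{22}) ⊗ r(u) + (x_{11}⊗x_{22} + x_{22}⊗x_{11}) ⊗ r^t(κ−u) + (x_{12}⊗x_{21} + x_{21}⊗x_{12}) ⊗ U(u), where on ℂⁿ ⊗ ℂⁿ: r(u) = I − P/u, r^t(w) = I − Q/w, U(u) = −P/u + εQ/(u−κ), with P = Σ_{i,j=1}^n e_{ij}⊗e_{ji}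 and the orthogonal-type Q = Σ_{i,j=1}^n e_{ij}⊗e_{j̄ī} (j̄ = n−j+1). -/

import Mathlib

open Matrix
open scoped Kronecker

noncomputable section

def theta (n : ℕ) (ε : ℂ) (i : Fin (2 * n)) : ℂ := if (i : ℕ) < n then ε else 1

def bar {m : ℕ} (i : Fin m) : Fin m := i.rev

def kap (n : ℕ) (ε : ℂ) : ℂ := (n : ℂ) - ε

def Pmat (N : ℕ) : Matrix (Fin N × Fin N) (Fin N × Fin N) ℂ :=
  Matrix.of fun p q => if p.1 = q.2 ∧ p.2 = q.1 then 1 else 0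

def Qmat (n : ℕ) (ε : ℂ) :
    Matrix (Fin (2*n) × Fin (2*n)) (Fin (2*n) × Fin (2*n)) ℂ :=
  Matrix.of fun p q =>
    if p.2 = bar p.1 ∧ q.2 = bar q.1 then theta n ε p.1 * theta n ε q.1 else 0

/-- the Zamolodchikov R-matrix `R̃(u)` on `ℂ^{2n} ⊗ ℂ^{2n}` -/
def Rmat (n : ℕ) (ε : ℂ) (u : ℂ) :
    Matrix (Fin (2*n) × Fin (2*n)) (Fin (2*n) × Fin (2*n)) ℂ :=
  (1 : Matrix (Fin (2*n) × Fin (2*n)) (Fin (2*n) × Fin (2*n)) ℂ)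
    - u⁻¹ • Pmat (2*n) + (u - kap n ε)⁻¹ • Qmat n ε

/-- the identification `ℂ² ⊗ ℂⁿ ≅ ℂ^{2n}`, `(x, r) ↦ x·n + r` -/
def merge (n : ℕ) (x : Fin 2) (r : Fin n) : Fin (2*n) :=
  ⟨x.val * n + r.val, by
    have hx : x.val ≤ 1 := Nat.le_of_lt_succ x.isLt
    have hm : x.val * n ≤ 1 * n := Nat.mul_le_mul_right n hx
    have hr := r.isLt
    omega⟩

/-- matrix units of `End(ℂ²)` -/
def xm (a b : Fin 2) : Matrix (Fin 2) (Fin 2) ℂ := Matrix.single a b 1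

/-- permutation operator on `ℂⁿ ⊗ ℂⁿ` -/
def Pn (n : ℕ) : Matrix (Fin n × Fin n) (Fin n × Fin n) ℂ :=
  Matrix.of fun p q => if p.1 = q.2 ∧ p.2 = q.1 then 1 else 0

/-- orthogonal-type `Q` on `ℂⁿ ⊗ ℂⁿ` -/
def Qn (n : ℕ) : Matrix (Fin n × Fin n) (Fin n × Fin n) ℂ :=
  Matrix.of fun p q => if p.2 = bar p.1 ∧ q.2 = bar q.1 then 1 else 0

/-- `r(u) = I - P/u` -/
def rY (n : ℕ) (u : ℂ) : Matrix (Fin n × Fin n) (Fin n × Fin n) ℂ :=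
  (1 : Matrix (Fin n × Fin n) (Fin n × Fin n) ℂ) - u⁻¹ • Pn n

/-- `r^t(w) = I - Q/w` -/
def rYt (n : ℕ) (w : ℂ) : Matrix (Fin n × Fin n) (Fin n × Fin n) ℂ :=
  (1 : Matrix (Fin n × Fin n) (Fin n × Fin n) ℂ) - w⁻¹ • Qn n

/-- `U(u) = -P/u + εQ/(u-κ)` -/
def Uop (n : ℕ) (ε : ℂ) (u : ℂ) : Matrix (Fin n × Fin n) (Fin n × Fin n) ℂ :=
  -(u⁻¹) • Pn n + (ε / (u - kap n ε)) • Qn n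

/-- the six-vertex block form of the R-matrix, an operator on `(ℂ²⊗ℂ²) ⊗ (ℂⁿ⊗ℂⁿ)` -/
def sixV (n : ℕ) (ε : ℂ) (u : ℂ) :
    Matrix ((Fin 2 × Fin 2) × (Fin n × Fin n)) ((Fin 2 × Fin 2) × (Fin n × Fin n)) ℂ :=
  (xm 0 0 ⊗ₖ xm 0 0 + xm 1 1 ⊗ₖ xm 1 1) ⊗ₖ rY n u
    + (xm 0 0 ⊗ₖ xm 1 1 + xm 1 1 ⊗ₖ xm 0 0) ⊗ₖ rYt n (kap n ε - u)
    + (xm 0 1 ⊗ₖ xm 1 0 + xm 1 0 ⊗ₖ xm 0 1) ⊗ₖ Uop n ε u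

lemma merge_inj (n : ℕ) (x y : Fin 2) (i j : Fin n) :
    merge n x i = merge n y j ↔ x = y ∧ i = j := by
  have hi := i.isLt; have hj := j.isLt
  fin_cases x <;> fin_cases y <;> simp [merge, Fin.ext_iff] <;> omega

lemma bar_merge (n : ℕ) (x : Fin 2) (i : Fin n) :
    bar (merge n x i) = merge n x.rev (bar i) := by
  have hi := i.isLt
  fin_cases x <;> (apply Fin.ext; simp [bar, merge, Fin.val_rev]; omega)

lemma theta_merge (n : ℕ) (ε : ℂ) (x : Fin 2) (i : Fin n) :
    theta n ε (merge n x i) = if x = 0 then ε else 1 := by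
  have hi := i.isLt
  fin_cases x
  · simp [theta, merge, hi]
  · simp [theta, merge]

@[simp] lemma last_one2 : Fin.last 1 = (1 : Fin 2) := rfl

@[simp] lemma rev_zero2 : Fin.rev (0 : Fin 2) = 1 := rfl
@[simp] lemma rev_one2 : Fin.rev (1 : Fin 2) = 0 := rfl

theorem statement6 (n : ℕ) (hn : 1 ≤ n) (ε : ℂ) (hε : ε = 1 ∨ ε = -1)
    (u : ℂ) (h1 : u ≠ 0) (h2 : u - kap n ε ≠ 0) (h3 : kap n ε - u ≠ 0)
    (x y x' y' : Fin 2) (i j i' j' : Fin n) :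
    Rmat n ε u (merge n x i, merge n y j) (merge n x' i', merge n y' j')
      = sixV n ε u ((x, y), (i, j)) ((x', y'), (i', j')) := by
  have hε2 : ε * ε = 1 := by rcases hε with h | h <;> simp [h]
  have hQ : (u - kap n ε)⁻¹ = -(kap n ε - u)⁻¹ := by
    rw [show u - kap n ε = -(kap n ε - u) by ring, inv_neg]
  fin_cases x <;> fin_cases y <;> fin_cases x' <;> fin_cases y' <;>
    simp [Rmat, sixV, Pmat, Qmat, rY, rYt, Uop, Pn, Qn, xm, Matrix.one_apply,
      Matrix.kroneckerMap_apply, Matrix.sub_apply, Matrix.add_apply, Matrix.smul_apply,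
      Matrix.single, Prod.ext_iff, merge_inj, bar_merge, theta_merge] <;>
    split_ifs <;>
    first
    | rfl
    | (simp_all [hQ]; try field_simp; try ring)
    | (field_simp; ring)
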